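/- arXiv:2006.09362 — 8 statements merged into one kernel-verified Lean document; each statement's English description precedes it below -/
import Mathlib

section
/- Let P(x) = R(x) - q be a real polynomial of degree n ≥ 2 in x, where R is a monic polynomial with R(0) = 0, and let D(q) = disc_x(P(x)) be the discriminant of P with respect to x (a polynomial in q). Then the polynomial D(R(x)) is divisible by (R'(x))^2; i.e., D(R(x)) = (R'(x))^2 · U(x) for some polynomial U(x) of degree (n-1)(n-2). -/
open Polynomial

/-- The Sylvester matrix of `f` (of degree at most `m`) and `g` (of degree at most `n`). -/
noncomputable def sylvester {R : Type*} [CommRing R] (m n : ℕ) (f g : R[X]) :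
    Matrix (Fin (m + n)) (Fin (m + n)) R :=
  Matrix.of fun i j =>
    if (i : ℕ) < n then
      (if (i : ℕ) ≤ (j : ℕ) ∧ (j : ℕ) ≤ (i : ℕ) + m then f.coeff (m + i - j) else 0)
    else
      (if (i : ℕ) - n ≤ (j : ℕ) ∧ (j : ℕ) ≤ (i : ℕ) then g.coeff ((i : ℕ) - (j : ℕ)) else 0)

/-- The resultant of `f` (degree `m`) and `g` (degree `n`). -/
noncomputable def resultant {R : Type*} [CommRing R] (m n : ℕ) (f g : R[X]) : R :=
  (sylvester m n f g).det

/-- The discriminant of a monic polynomial `f` of degree `n`. -/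
noncomputable def discMonic {R : Type*} [CommRing R] (n : ℕ) (f : R[X]) : R :=
  (-1 : R) ^ (n * (n - 1) / 2) * resultant n (n - 1) f (derivative f)

section Aux

variable {K : Type*} {L : Type*}

lemma card_filter_fin_lt (sz k : ℕ) (hk : k ≤ sz) :
    ((Finset.univ : Finset (Fin sz)).filter fun s : Fin sz => (s : ℕ) < k).card = k := by
  have : ((Finset.univ : Finset (Fin sz)).filter fun s : Fin sz => (s : ℕ) < k)
      = (Finset.univ : Finset (Fin k)).map (Fin.castLEEmb hk) := by
    ext s
    simp only [Finset.mem_filter, Finset.mem_univ, true_and, Finset.mem_map, Fin.castLEEmb]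
    constructor
    · intro h; exact ⟨⟨(s : ℕ), h⟩, by ext; simp⟩
    · rintro ⟨t, rfl⟩; simpa using t.isLt
  rw [this, Finset.card_map, Finset.card_univ, Fintype.card_fin]

lemma sylvester_map [CommRing K] [CommRing L] (φ : K →+* L) (m n : ℕ) (f g : K[X]) :
    (sylvester m n f g).map φ = sylvester m n (f.map φ) (g.map φ) := by
  ext i j
  simp only [_root_.sylvester, Matrix.map_apply, Matrix.of_apply]
  split_ifs <;> simp [coeff_map]

lemma sylvester_mulVec [CommRing K] (m n : ℕ) (f g : K[X])
    (hf : f.natDegree ≤ m) (hg : g.natDegree ≤ n) (w : ℕ → K) (i : Fin (m + n)) :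
    (sylvester m n f g).mulVec (fun j => w (m + n - 1 - (j : ℕ))) i =
      if (i : ℕ) < n then ∑ t ∈ Finset.range (m + 1), f.coeff t * w (n - 1 - (i : ℕ) + t)
      else ∑ t ∈ Finset.range (n + 1), g.coeff t * w (m + n - 1 - (i : ℕ) + t) := by
  rw [Matrix.mulVec, dotProduct]
  simp only [_root_.sylvester, Matrix.of_apply]
  split_ifs with hi
  · -- f rows
    rw [show (∑ j : Fin (m + n), (if (i : ℕ) ≤ (j : ℕ) ∧ (j : ℕ) ≤ (i : ℕ) + m
        then f.coeff (m + i - j) else 0) * w (m + n - 1 - (j : ℕ)))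
      = ∑ j ∈ Finset.univ.filter (fun j : Fin (m + n) => (i : ℕ) ≤ (j : ℕ) ∧ (j : ℕ) ≤ (i : ℕ) + m),
          f.coeff (m + i - j) * w (m + n - 1 - (j : ℕ)) from ?_]
    · refine Finset.sum_bij' (i := fun j _ => m + (i : ℕ) - (j : ℕ))
        (j := fun t ht => (⟨m + (i : ℕ) - t, by
          simp only [Finset.mem_range] at ht; omega⟩ : Fin (m + n))) ?_ ?_ ?_ ?_ ?_
      · intro j hj; simp only [Finset.mem_filter, Finset.mem_univ, true_and] at hj
        simp only [Finset.mem_range]; omega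
      · intro t ht; simp only [Finset.mem_range] at ht
        simp only [Finset.mem_filter, Finset.mem_univ, true_and]; constructor <;> omega
      · intro j hj; simp only [Finset.mem_filter, Finset.mem_univ, true_and] at hj
        apply Fin.ext; simp only; omega
      · intro t ht; simp only [Finset.mem_range] at ht; simp only; omega
      · intro j hj; simp only [Finset.mem_filter, Finset.mem_univ, true_and] at hj
        have hw : m + n - 1 - (j : ℕ) = n - 1 - (i : ℕ) + (m + (i : ℕ) - (j : ℕ)) := by omega
        rw [hw]
    · rw [Finset.sum_filter]
      refine Finset.sum_congr rfl fun j _ => ?_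
      split_ifs <;> simp
  · -- g rows
    rw [show (∑ j : Fin (m + n), (if (i : ℕ) - n ≤ (j : ℕ) ∧ (j : ℕ) ≤ (i : ℕ)
        then g.coeff ((i : ℕ) - (j : ℕ)) else 0) * w (m + n - 1 - (j : ℕ)))
      = ∑ j ∈ Finset.univ.filter (fun j : Fin (m + n) => (i : ℕ) - n ≤ (j : ℕ) ∧ (j : ℕ) ≤ (i : ℕ)),
          g.coeff ((i : ℕ) - (j : ℕ)) * w (m + n - 1 - (j : ℕ)) from ?_]
    · have hilt := i.isLt
      refine Finset.sum_bij' (i := fun j _ => (i : ℕ) - (j : ℕ))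
        (j := fun t ht => (⟨(i : ℕ) - t, by omega⟩ : Fin (m + n))) ?_ ?_ ?_ ?_ ?_
      · intro j hj; simp only [Finset.mem_filter, Finset.mem_univ, true_and] at hj
        simp only [Finset.mem_range]; omega
      · intro t ht; simp only [Finset.mem_range] at ht
        simp only [Finset.mem_filter, Finset.mem_univ, true_and]; constructor <;> omega
      · intro j hj; simp only [Finset.mem_filter, Finset.mem_univ, true_and] at hj
        apply Fin.ext; simp only; omega
      · intro t ht; simp only [Finset.mem_range] at ht; simp only; omega
      · intro j hj; simp only [Finset.mem_filter, Finset.mem_univ, true_and] at hj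
        have hw : m + n - 1 - (j : ℕ) = m + n - 1 - (i : ℕ) + ((i : ℕ) - (j : ℕ)) := by omega
        rw [hw]
    · rw [Finset.sum_filter]
      refine Finset.sum_congr rfl fun j _ => ?_
      split_ifs <;> simp

lemma sum_coeff_eval_iterate_deriv {K : Type*} [CommRing K] (f : K[X]) {m : ℕ} (hf : f.natDegree ≤ m)
    (e s : ℕ) (θ : K) :
    ∑ t ∈ Finset.range (m + 1), f.coeff t * (derivative^[s] (X ^ (e + t) : K[X])).eval θ
      = (derivative^[s] (X ^ e * f)).eval θ := by
  conv_rhs => rw [f.as_sum_range' (m + 1) (Nat.lt_succ_of_le hf)]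
  rw [Finset.mul_sum, iterate_derivative_sum, eval_finset_sum]
  refine Finset.sum_congr rfl fun t ht => ?_
  have h1 : (X : K[X]) ^ e * (C (f.coeff t) * X ^ t) = C (f.coeff t) * X ^ (e + t) := by
    rw [pow_add]; ring
  rw [← C_mul_X_pow_eq_monomial, h1, iterate_derivative_C_mul, eval_mul, eval_C]

lemma eval_iterate_derivative_eq_zero {K : Type*} [CommRing K] {θ : K} {p : K[X]} {s : ℕ}
    (h : (X - C θ) ^ (s + 1) ∣ p) : (derivative^[s] p).eval θ = 0 := by
  induction s generalizing p with
  | zero =>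
    obtain ⟨q, rfl⟩ := h
    simp
  | succ s ih =>
    rw [Function.iterate_succ_apply]
    apply ih
    have := Polynomial.pow_sub_one_dvd_derivative_of_pow_dvd (n := s + 2) h
    simpa using this

lemma sylvester_mulVec_eval [CommRing K] (m n : ℕ) (f g : K[X])
    (hf : f.natDegree ≤ m) (hg : g.natDegree ≤ n) (θ : K) (s : ℕ)
    (hsf : (X - C θ) ^ (s + 1) ∣ f) (hsg : (X - C θ) ^ (s + 1) ∣ g) :
    (sylvester m n f g).mulVec
      (fun j => (derivative^[s] (X ^ (m + n - 1 - (j : ℕ)) : K[X])).eval θ) = 0 := by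
  funext i
  rw [sylvester_mulVec m n f g hf hg (fun e => (derivative^[s] (X ^ e : K[X])).eval θ) i]
  show (if (i : ℕ) < n then _ else _) = (0 : Fin (m+n) → K) i
  split_ifs with hi
  · rw [sum_coeff_eval_iterate_deriv f hf (n - 1 - (i : ℕ)) s θ]
    show (derivative^[s] (X ^ (n - 1 - (i:ℕ)) * f)).eval θ = 0
    exact eval_iterate_derivative_eq_zero (Dvd.dvd.mul_left hsf _)
  · rw [sum_coeff_eval_iterate_deriv g hg (m + n - 1 - (i : ℕ)) s θ]
    show (derivative^[s] (X ^ (m + n - 1 - (i:ℕ)) * g)).eval θ = 0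
    exact eval_iterate_derivative_eq_zero (Dvd.dvd.mul_left hsg _)

noncomputable def vdmExt [CommRing K] (sz k : ℕ) (θ : K) : Matrix (Fin sz) (Fin sz) K :=
  Matrix.of fun (j s : Fin sz) =>
    if (s : ℕ) < k then (derivative^[(s : ℕ)] (X ^ (sz - 1 - (j : ℕ)) : K[X])).eval θ
    else if (j : ℕ) = (s : ℕ) - k then 1 else 0

lemma vdmExt_det_ne_zero [Field K] [CharZero K] (sz k : ℕ) (hk : k ≤ sz) (θ : K) :
    (vdmExt sz k θ).det ≠ 0 := by
  classical
  set Q := vdmExt sz k θ with hQ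
  have hF : Function.Injective (fun i : Fin sz =>
      if h : (i : ℕ) < k then (⟨sz - 1 - (i : ℕ), by omega⟩ : Fin sz)
      else ⟨(i : ℕ) - k, by omega⟩) := by
    intro a b hab
    have ha := a.isLt; have hb := b.isLt
    apply Fin.ext
    by_cases h1 : (a : ℕ) < k <;> by_cases h2 : (b : ℕ) < k <;>
      simp only [h1, h2, dif_pos, dif_neg, not_false_iff, Fin.mk.injEq] at hab <;>
      omega
  let σ : Equiv.Perm (Fin sz) := Equiv.ofBijective _ (Finite.injective_iff_bijective.mp hF)
  have hσ : ∀ i : Fin sz, (σ i : Fin sz) =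
      if h : (i : ℕ) < k then (⟨sz - 1 - (i : ℕ), by omega⟩ : Fin sz)
      else ⟨(i : ℕ) - k, by omega⟩ := fun i => rfl
  set T : Matrix (Fin sz) (Fin sz) K := Q.submatrix σ id with hT
  have htri : T.BlockTriangular OrderDual.toDual := by
    intro i s his
    have his' : (i : ℕ) < (s : ℕ) := his
    have hi := i.isLt; have hs := s.isLt
    simp only [hT, Matrix.submatrix_apply, id_eq, hσ, hQ, vdmExt, Matrix.of_apply]
    by_cases h1 : (i : ℕ) < k
    · rw [dif_pos h1]
      by_cases h2 : (s : ℕ) < k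
      · rw [if_pos h2]
        simp only
        have hexp : sz - 1 - (sz - 1 - (i : ℕ)) = (i : ℕ) := by omega
        rw [hexp, iterate_derivative_eq_zero (by rw [natDegree_X_pow]; omega), eval_zero]
      · rw [if_neg h2, if_neg (by simp only; omega)]
    · rw [dif_neg h1]
      by_cases h2 : (s : ℕ) < k
      · omega
      · rw [if_neg h2, if_neg (by simp only; omega)]
  have hdiag : ∀ i : Fin sz, T i i ≠ 0 := by
    intro i
    have hi := i.isLt
    simp only [hT, Matrix.submatrix_apply, id_eq, hσ, hQ, vdmExt, Matrix.of_apply]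
    by_cases h1 : (i : ℕ) < k
    · rw [dif_pos h1, if_pos h1]
      simp only
      have hexp : sz - 1 - (sz - 1 - (i : ℕ)) = (i : ℕ) := by omega
      rw [hexp, iterate_derivative_X_pow_eq_smul]
      simp only [Nat.sub_self, pow_zero, eval_smul, eval_one, smul_eq_mul, mul_one,
        Nat.descFactorial_self]
      exact Nat.cast_ne_zero.mpr (Nat.factorial_ne_zero _)
    · rw [dif_neg h1, if_neg h1, if_pos (by simp only)]
      exact one_ne_zero
  have hTdet : T.det ≠ 0 := by
    rw [Matrix.det_of_lowerTriangular T htri]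
    exact Finset.prod_ne_zero_iff.mpr fun i _ => hdiag i
  intro h0
  apply hTdet
  rw [hT, Matrix.det_permute σ Q, h0, mul_zero]

lemma pow_dvd_det_of_kernel [Field K] {sz k : ℕ} (N : Matrix (Fin sz) (Fin sz) K[X])
    (Q : Matrix (Fin sz) (Fin sz) K) (hQ : Q.det ≠ 0) (c : K) (hk : k ≤ sz)
    (hcol : ∀ s : Fin sz, (s : ℕ) < k → ∀ i, ((N * Q.map (C : K →+* K[X])) i s).eval c = 0) :
    (X - C c) ^ k ∣ N.det := by
  classical
  set N' : Matrix (Fin sz) (Fin sz) K[X] := N * Q.map (C : K →+* K[X]) with hN'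
  set d : Fin sz → K[X] := fun s => if (s : ℕ) < k then X - C c else 1 with hd
  set N'' : Matrix (Fin sz) (Fin sz) K[X] :=
    Matrix.of (fun i s => if (s : ℕ) < k then N' i s /ₘ (X - C c) else N' i s) with hN''
  have hfac : N' = N'' * Matrix.diagonal d := by
    funext i s
    show N' i s = (N'' * Matrix.diagonal d) i s
    rw [Matrix.mul_diagonal]
    by_cases h : (s : ℕ) < k
    · simp only [hN'', hd, Matrix.of_apply, if_pos h]
      rw [mul_comm]
      exact (mul_divByMonic_eq_iff_isRoot.2 (hcol s h i)).symm
    · simp only [hN'', hd, Matrix.of_apply, if_neg h, mul_one]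
  have hprod : (∏ s : Fin sz, d s) = (X - C c) ^ k := by
    rw [hd]
    rw [Finset.prod_ite _ _]
    simp only [Finset.prod_const, Finset.prod_const_one, mul_one, one_pow]
    rw [card_filter_fin_lt sz k hk]
  have hdet : N.det * C Q.det = N''.det * (X - C c) ^ k := by
    have h1 : N'.det = N.det * C Q.det := by
      rw [hN', Matrix.det_mul]
      congr 1
      exact (RingHom.map_det (C : K →+* K[X]) Q).symm
    have h2 : N'.det = N''.det * (X - C c) ^ k := by
      rw [hfac, Matrix.det_mul, Matrix.det_diagonal, hprod]
    rw [← h1, h2]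
  have h4 : (C Q.det : K[X]) * C Q.det⁻¹ = 1 := by
    rw [← C_mul, mul_inv_cancel₀ hQ, C_1]
  refine ⟨N''.det * C Q.det⁻¹, ?_⟩
  calc N.det = N.det * (C Q.det * C Q.det⁻¹) := by rw [h4, mul_one]
  _ = (N.det * C Q.det) * C Q.det⁻¹ := by ring
  _ = (X - C c) ^ k * (N''.det * C Q.det⁻¹) := by rw [hdet]; ring

lemma det_linear_rows [CommRing K] {sz : ℕ} (A B : Matrix (Fin sz) (Fin sz) K)
    (F : Finset (Fin sz)) (hB : ∀ i ∉ F, ∀ j, B i j = 0) :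
    (Matrix.of fun i j => C (A i j) + X * C (B i j) : Matrix (Fin sz) (Fin sz) K[X]).det
      = ∑ s ∈ F.powerset,
          X ^ s.card * C ((Matrix.of fun i j => if i ∈ s then B i j else A i j).det) := by
  classical
  let f := (Matrix.detRowAlternating :
    (Fin sz → K[X]) [⋀^Fin sz]→ₗ[K[X]] K[X]).toMultilinearMap
  let m2 : Fin sz → Fin sz → K[X] := fun i j => X * C (B i j)
  let m1 : Fin sz → Fin sz → K[X] := fun i j => C (A i j)
  have hM : (Matrix.of fun i j => C (A i j) + X * C (B i j) : Matrix (Fin sz) (Fin sz) K[X])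
      = m2 + m1 := by
    funext i j; show C (A i j) + X * C (B i j) = m2 i j + m1 i j; simp [m1, m2, add_comm]
  have hdet : (Matrix.of fun i j => C (A i j) + X * C (B i j) :
      Matrix (Fin sz) (Fin sz) K[X]).det = f (m2 + m1) := by rw [hM]; rfl
  rw [hdet, f.map_add_univ m2 m1]
  -- now each term
  have hterm : ∀ s : Finset (Fin sz), f (s.piecewise m2 m1)
      = if s ⊆ F then X ^ s.card *
          C ((Matrix.of fun i j => if i ∈ s then B i j else A i j).det) else 0 := by
    intro s
    by_cases hs : s ⊆ F
    · rw [if_pos hs]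
      set mm : Fin sz → Fin sz → K[X] :=
        s.piecewise (fun i j => C (B i j)) m1 with hmm
      have hpw : s.piecewise m2 m1 = s.piecewise (fun i => (X : K[X]) • mm i) mm := by
        funext i
        by_cases hi : i ∈ s
        · rw [Finset.piecewise_eq_of_mem _ _ _ hi, Finset.piecewise_eq_of_mem _ _ _ hi, hmm,
            Finset.piecewise_eq_of_mem _ _ _ hi]
          funext j; simp only [m2, Pi.smul_apply, smul_eq_mul]
        · rw [Finset.piecewise_eq_of_notMem _ _ _ hi, Finset.piecewise_eq_of_notMem _ _ _ hi,
            hmm, Finset.piecewise_eq_of_notMem _ _ _ hi]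
      rw [hpw, f.map_piecewise_smul (fun _ => (X : K[X])) mm s]
      rw [Finset.prod_const, smul_eq_mul]
      congr 1
      have : mm = ((Matrix.of fun i j => if i ∈ s then B i j else A i j :
          Matrix (Fin sz) (Fin sz) K)).map (C : K →+* K[X]) := by
        funext i j
        by_cases hi : i ∈ s
        · rw [hmm, Finset.piecewise_eq_of_mem _ _ _ hi]
          simp [hi]
        · rw [hmm, Finset.piecewise_eq_of_notMem _ _ _ hi]
          simp [hi, m1]
      show f mm = _
      rw [this]
      exact ((RingHom.map_det (C : K →+* K[X]) _)).symm
    · rw [if_neg hs]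
      obtain ⟨i, his, hiF⟩ := Finset.not_subset.mp hs
      apply f.map_coord_zero i
      rw [Finset.piecewise_eq_of_mem _ _ _ his]
      funext j
      show X * C (B i j) = 0
      rw [hB i hiF j, map_zero, mul_zero]
  calc (∑ s : Finset (Fin sz), f (s.piecewise m2 m1))
      = ∑ s : Finset (Fin sz), if s ⊆ F then X ^ s.card *
          C ((Matrix.of fun i j => if i ∈ s then B i j else A i j).det) else 0 := by
        exact Finset.sum_congr rfl fun s _ => hterm s
    _ = _ := by
        rw [← Finset.sum_filter]
        congr 1
        ext s
        simp [Finset.mem_powerset]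

lemma detM_spec (n : ℕ) (hn : 2 ≤ n) (R : ℝ[X]) (hmonic : R.Monic) (hdeg : R.natDegree = n)
    (h0 : R.eval 0 = 0) :
    (sylvester n (n - 1) (R.map (C : ℝ →+* ℝ[X]) - C X)
        (derivative (R.map (C : ℝ →+* ℝ[X]) - C X))).det ≠ 0 ∧
      (sylvester n (n - 1) (R.map (C : ℝ →+* ℝ[X]) - C X)
        (derivative (R.map (C : ℝ →+* ℝ[X]) - C X))).det.natDegree = n - 1 := by
  classical
  set f₀ : (ℝ[X])[X] := R.map (C : ℝ →+* ℝ[X]) - C X with hf₀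
  have hg₀ : derivative f₀ = (derivative R).map (C : ℝ →+* ℝ[X]) := by
    rw [hf₀, derivative_sub, derivative_map, derivative_C, sub_zero]
  have hR0 : R.coeff 0 = 0 := by rwa [coeff_zero_eq_eval_zero]
  have hf0c : ∀ t, f₀.coeff t = C (R.coeff t) - if t = 0 then (X : ℝ[X]) else 0 := by
    intro t
    rw [hf₀, coeff_sub, coeff_map, coeff_C]
  set sz := n + (n - 1) with hsz
  set realA : Matrix (Fin sz) (Fin sz) ℝ := Matrix.of fun i j =>
    if (i : ℕ) < n - 1 then
      (if (i : ℕ) ≤ (j : ℕ) ∧ (j : ℕ) ≤ (i : ℕ) + n ∧ n + (i : ℕ) - (j : ℕ) ≠ 0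
        then R.coeff (n + (i : ℕ) - (j : ℕ)) else 0)
    else
      (if (i : ℕ) - (n - 1) ≤ (j : ℕ) ∧ (j : ℕ) ≤ (i : ℕ)
        then (derivative R).coeff ((i : ℕ) - (j : ℕ)) else 0) with hrealA
  set realB : Matrix (Fin sz) (Fin sz) ℝ := Matrix.of fun i j =>
    if (i : ℕ) < n - 1 ∧ (j : ℕ) = n + (i : ℕ) then -1 else 0 with hrealB
  have hMdecomp : sylvester n (n - 1) f₀ (derivative f₀)
      = Matrix.of fun i j => C (realA i j) + X * C (realB i j) := by
    funext i j
    show (sylvester n (n - 1) f₀ (derivative f₀)) i j = C (realA i j) + X * C (realB i j)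
    simp only [_root_.sylvester, Matrix.of_apply, hrealA, hrealB, hg₀, hf0c, coeff_map]
    by_cases hi : (i : ℕ) < n - 1
    · simp only [if_pos hi]
      by_cases hj : (i : ℕ) ≤ (j : ℕ) ∧ (j : ℕ) ≤ (i : ℕ) + n
      · simp only [if_pos hj]
        by_cases ht : n + (i : ℕ) - (j : ℕ) = 0
        · rw [if_pos ht,
            if_neg (show ¬((i : ℕ) ≤ (j : ℕ) ∧ (j : ℕ) ≤ (i : ℕ) + n ∧ n + (i : ℕ) - (j : ℕ) ≠ 0)
              from by push_neg; intro _ _; omega),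
            if_pos (show (i : ℕ) < n - 1 ∧ (j : ℕ) = n + (i : ℕ) from ⟨hi, by omega⟩), ht, hR0]
          simp
        · rw [if_neg ht, if_pos (show (i : ℕ) ≤ (j : ℕ) ∧ (j : ℕ) ≤ (i : ℕ) + n ∧
              n + (i : ℕ) - (j : ℕ) ≠ 0 from ⟨hj.1, hj.2, ht⟩),
            if_neg (show ¬((i : ℕ) < n - 1 ∧ (j : ℕ) = n + (i : ℕ)) from by
              rintro ⟨-, hc⟩; omega)]
          simp
      · rw [if_neg hj,
          if_neg (show ¬((i : ℕ) ≤ (j : ℕ) ∧ (j : ℕ) ≤ (i : ℕ) + n ∧ n + (i : ℕ) - (j : ℕ) ≠ 0)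
            from by rintro ⟨h1, h2, h3⟩; exact hj ⟨h1, by omega⟩),
          if_neg (show ¬((i : ℕ) < n - 1 ∧ (j : ℕ) = n + (i : ℕ)) from by
            rintro ⟨-, hc⟩; omega)]
        simp
    · simp only [if_neg hi]
      rw [if_neg (show ¬((i : ℕ) < n - 1 ∧ (j : ℕ) = n + (i : ℕ)) from by
        rintro ⟨hc, -⟩; omega)]
      by_cases hj : (i : ℕ) - (n - 1) ≤ (j : ℕ) ∧ (j : ℕ) ≤ (i : ℕ)
      · rw [if_pos hj, if_pos hj]
        simp
      · rw [if_neg hj, if_neg hj]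
        simp
  set F : Finset (Fin sz) := Finset.univ.filter (fun i : Fin sz => (i : ℕ) < n - 1) with hF
  have hFcard : F.card = n - 1 := card_filter_fin_lt sz (n - 1) (by omega)
  have hBzero : ∀ i ∉ F, ∀ j, realB i j = 0 := by
    intro i hi j
    simp only [hF, Finset.mem_filter, Finset.mem_univ, true_and, not_lt] at hi
    simp only [hrealB, Matrix.of_apply]
    rw [if_neg (by omega)]
  have hexp := det_linear_rows realA realB F hBzero
  -- the leading minor
  set P : Matrix (Fin sz) (Fin sz) ℝ :=
    Matrix.of fun i j => if i ∈ F then realB i j else realA i j with hP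
  -- P is nonsingular via a block decomposition
  have hPdet : P.det ≠ 0 := by
    have her : Function.Bijective (fun x : Fin (n - 1) ⊕ Fin n => Sum.elim
        (fun a : Fin (n - 1) => (⟨(a : ℕ), by omega⟩ : Fin sz))
        (fun b : Fin n => (⟨n - 1 + (b : ℕ), by omega⟩ : Fin sz)) x) := by
      rw [Fintype.bijective_iff_injective_and_card]
      constructor
      · rintro (x | x) (y | y) hab <;>
          simp only [Sum.elim_inl, Sum.elim_inr, Fin.mk.injEq] at hab <;>
          have hx := x.isLt <;> have hy := y.isLt <;>
          first
          | (congr 1; apply Fin.ext; omega)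
          | (exfalso; omega)
      · simp only [Fintype.card_sum, Fintype.card_fin]; omega
    have hec : Function.Bijective (fun x : Fin (n - 1) ⊕ Fin n => Sum.elim
        (fun a : Fin (n - 1) => (⟨n + (a : ℕ), by omega⟩ : Fin sz))
        (fun b : Fin n => (⟨(b : ℕ), by omega⟩ : Fin sz)) x) := by
      rw [Fintype.bijective_iff_injective_and_card]
      constructor
      · rintro (x | x) (y | y) hab <;>
          simp only [Sum.elim_inl, Sum.elim_inr, Fin.mk.injEq] at hab <;>
          have hx := x.isLt <;> have hy := y.isLt <;>
          first
          | (congr 1; apply Fin.ext; omega)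
          | (exfalso; omega)
      · simp only [Fintype.card_sum, Fintype.card_fin]; omega
    set er := Equiv.ofBijective _ her with her'
    set ec := Equiv.ofBijective _ hec with hec'
    set DD : Matrix (Fin n) (Fin n) ℝ := Matrix.of fun b b' =>
      if (b : ℕ) ≤ (b' : ℕ) then (derivative R).coeff (n - 1 + (b : ℕ) - (b' : ℕ)) else 0
      with hDD
    set CC : Matrix (Fin n) (Fin (n - 1)) ℝ := Matrix.of fun b a =>
      P (er (Sum.inr b)) (ec (Sum.inl a)) with hCC
    have hblocks : P.submatrix er ec
        = Matrix.fromBlocks (-1 : Matrix (Fin (n - 1)) (Fin (n - 1)) ℝ) 0 CC DD := by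
      apply Matrix.ext
      rintro (a | b) (a' | b')
      · -- top-left
        show P (er (Sum.inl a)) (ec (Sum.inl a')) = (-1 : Matrix (Fin (n-1)) (Fin (n-1)) ℝ) a a'
        have h1 : ((er (Sum.inl a) : Fin sz) : ℕ) = (a : ℕ) := rfl
        have h2 : ((ec (Sum.inl a') : Fin sz) : ℕ) = n + (a' : ℕ) := rfl
        simp only [hP, Matrix.of_apply, hF, Finset.mem_filter, Finset.mem_univ, true_and, h1, h2]
        rw [if_pos (by have := a.isLt; omega)]
        simp only [hrealB, Matrix.of_apply, h1, h2]
        simp only [Matrix.neg_apply, Matrix.one_apply]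
        by_cases hee : a = a'
        · subst hee; rw [if_pos ⟨by have := a.isLt; omega, rfl⟩, if_pos rfl]
        · have h3 : ¬((a : ℕ) < n - 1 ∧ n + (a' : ℕ) = n + (a : ℕ)) := by
            rintro ⟨-, hc⟩; exact hee (by apply Fin.ext; omega)
          rw [if_neg h3, if_neg hee]
          simp
      · -- top-right
        show P (er (Sum.inl a)) (ec (Sum.inr b')) = 0
        have h1 : ((er (Sum.inl a) : Fin sz) : ℕ) = (a : ℕ) := rfl
        have h2 : ((ec (Sum.inr b') : Fin sz) : ℕ) = (b' : ℕ) := rfl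
        simp only [hP, Matrix.of_apply, hF, Finset.mem_filter, Finset.mem_univ, true_and, h1, h2]
        rw [if_pos (by have := a.isLt; omega)]
        simp only [hrealB, Matrix.of_apply, h1, h2]
        rw [if_neg (by have := b'.isLt; rintro ⟨-, hc⟩; omega)]
      · -- bottom-left
        rfl
      · -- bottom-right
        show P (er (Sum.inr b)) (ec (Sum.inr b')) = DD b b'
        have h1 : ((er (Sum.inr b) : Fin sz) : ℕ) = n - 1 + (b : ℕ) := rfl
        have h2 : ((ec (Sum.inr b') : Fin sz) : ℕ) = (b' : ℕ) := rfl
        simp only [hP, Matrix.of_apply, hF, Finset.mem_filter, Finset.mem_univ, true_and, h1, h2]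
        rw [if_neg (by omega)]
        simp only [hrealA, Matrix.of_apply, h1, h2]
        rw [if_neg (by omega)]
        simp only [hDD, Matrix.of_apply]
        have hble := b'.isLt
        by_cases hbb : (b : ℕ) ≤ (b' : ℕ)
        · rw [if_pos (by omega), if_pos hbb]
        · rw [if_neg (by omega), if_neg hbb]
    have hDDdet : DD.det ≠ 0 := by
      have htri : DD.BlockTriangular id := by
        intro b b' hbb
        have : (b' : ℕ) < (b : ℕ) := hbb
        simp only [hDD, Matrix.of_apply]
        rw [if_neg (by omega)]
      rw [Matrix.det_of_upperTriangular htri]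
      apply Finset.prod_ne_zero_iff.mpr
      intro b _
      simp only [hDD, Matrix.of_apply, if_pos le_rfl]
      have hcd : (derivative R).coeff (n - 1 + (b : ℕ) - (b : ℕ)) = (n : ℝ) := by
        have h1 : n - 1 + (b : ℕ) - (b : ℕ) = n - 1 := by omega
        rw [h1, coeff_derivative]
        have h2 : n - 1 + 1 = n := by omega
        rw [h2, show R.coeff n = 1 from by
          have := hmonic.coeff_natDegree; rwa [hdeg] at this, one_mul]
        push_cast [Nat.cast_sub (by omega : 1 ≤ n)]
        ring
      rw [hcd]
      exact Nat.cast_ne_zero.mpr (by omega)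
    have hfbdet : (P.submatrix er ec).det ≠ 0 := by
      rw [hblocks, Matrix.det_fromBlocks_zero₁₂]
      apply mul_ne_zero
      · have : (-1 : Matrix (Fin (n - 1)) (Fin (n - 1)) ℝ) = -(1 : Matrix _ _ ℝ) := rfl
        rw [this, Matrix.det_neg, Matrix.det_one, mul_one]
        exact pow_ne_zero _ (by norm_num)
      · exact hDDdet
    intro hP0
    apply hfbdet
    have hρ : P.submatrix er ec = (P.submatrix er er).submatrix id (ec.trans er.symm) := by
      apply Matrix.ext
      intro i j
      simp only [Matrix.submatrix_apply, id_eq, Equiv.trans_apply, Equiv.apply_symm_apply]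
    rw [hρ, Matrix.det_permute' (ec.trans er.symm) (P.submatrix er er),
      Matrix.det_submatrix_equiv_self er P, hP0, mul_zero]
  -- now conclude
  have hcoeff : (sylvester n (n - 1) f₀ (derivative f₀)).det.coeff (n - 1) = P.det := by
    rw [hMdecomp, hexp, finset_sum_coeff]
    rw [Finset.sum_eq_single F]
    · rw [hFcard, mul_comm, coeff_C_mul, coeff_X_pow, if_pos rfl, mul_one]
    · intro s hs hsne
      have hsub := Finset.mem_powerset.mp hs
      have hlt : s.card < n - 1 := by
        rw [← hFcard]
        exact Finset.card_lt_card (Finset.ssubset_iff_subset_ne.mpr ⟨hsub, hsne⟩)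
      rw [mul_comm, coeff_C_mul, coeff_X_pow, if_neg (by omega), mul_zero]
    · intro hFF
      exact absurd (Finset.mem_powerset_self F) hFF
  have hdegle : (sylvester n (n - 1) f₀ (derivative f₀)).det.natDegree ≤ n - 1 := by
    rw [hMdecomp, hexp]
    apply natDegree_sum_le_of_forall_le
    intro s hs
    refine le_trans (natDegree_mul_le) ?_
    rw [natDegree_X_pow, natDegree_C, add_zero]
    rw [← hFcard]
    exact Finset.card_le_card (Finset.mem_powerset.mp hs)
  have hne : (sylvester n (n - 1) f₀ (derivative f₀)).det ≠ 0 := by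
    intro hc
    rw [hc, coeff_zero] at hcoeff
    exact hPdet hcoeff.symm
  refine ⟨hne, le_antisymm hdegle (le_natDegree_of_ne_zero ?_)⟩
  rw [hcoeff]
  exact hPdet

end Aux

/-- for `P(x) = R(x) - q` with `R` monic of degree `n ≥ 2` and `R(0) = 0`,
the discriminant `D(q)` of `P` with respect to `x` satisfies
`D(R(x)) = (R'(x))^2 · U(x)` with `U` of degree `(n-1)(n-2)`. -/
theorem stmt0 (n : ℕ) (hn : 2 ≤ n) (R : ℝ[X]) (hmonic : R.Monic) (hdeg : R.natDegree = n)
    (h0 : R.eval 0 = 0)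
    (D : ℝ[X]) (hD : D = discMonic n (R.map (C : ℝ →+* ℝ[X]) - C X)) :
    ∃ U : ℝ[X], U.natDegree = (n - 1) * (n - 2) ∧
      D.comp R = (derivative R) ^ 2 * U := by
  classical
  obtain ⟨hMne, hMdeg⟩ := detM_spec n hn R hmonic hdeg h0
  set f₀ : (ℝ[X])[X] := R.map (C : ℝ →+* ℝ[X]) - C X with hf₀
  set M : Matrix (Fin (n + (n - 1))) (Fin (n + (n - 1))) ℝ[X] :=
    sylvester n (n - 1) f₀ (derivative f₀) with hM
  have hε : ((-1 : ℝ[X]) ^ (n * (n - 1) / 2)) = C ((-1 : ℝ) ^ (n * (n - 1) / 2)) := by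
    rw [map_pow, map_neg, map_one]
  have hDC : D = C ((-1 : ℝ) ^ (n * (n - 1) / 2)) * M.det := by
    rw [hD, discMonic, _root_.resultant, hε]
  have hCε : C ((-1 : ℝ) ^ (n * (n - 1) / 2)) ≠ 0 := by
    rw [Ne, C_eq_zero]
    exact pow_ne_zero _ (by norm_num)
  have hDne : D ≠ 0 := by
    rw [hDC]; exact mul_ne_zero hCε hMne
  have hDdeg : D.natDegree = n - 1 := by
    rw [hDC, natDegree_mul hCε hMne, natDegree_C, zero_add, hMdeg]
  -- complex side
  set φ : ℝ →+* ℂ := algebraMap ℝ ℂ with hφ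
  set Rc : ℂ[X] := R.map φ with hRc
  have hRcmonic : Rc.Monic := hmonic.map φ
  have hRcdeg : Rc.natDegree = n := by
    rw [hRc, hmonic.natDegree_map, hdeg]
  set g : ℂ[X] := derivative Rc with hg
  have hgRc : g = (derivative R).map φ := by rw [hg, hRc, derivative_map]
  have hdRcoeff : (derivative R).coeff (n - 1) = (n : ℝ) := by
    rw [coeff_derivative, show n - 1 + 1 = n from by omega,
      show R.coeff n = 1 from by have := hmonic.coeff_natDegree; rwa [hdeg] at this, one_mul]
    push_cast [Nat.cast_sub (by omega : 1 ≤ n)]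
    ring
  have hdRne : derivative R ≠ 0 := fun hc => by
    have := hdRcoeff
    rw [hc, coeff_zero] at this
    exact (Nat.cast_ne_zero.mpr (by omega : n ≠ 0)) this.symm
  have hdRdeg : (derivative R).natDegree = n - 1 := by
    refine le_antisymm (le_trans (natDegree_derivative_le R) (by omega)) ?_
    · apply le_natDegree_of_ne_zero
      rw [hdRcoeff]
      exact Nat.cast_ne_zero.mpr (by omega)
  have hgne : g ≠ 0 := by
    rw [hgRc, Ne, Polynomial.map_eq_zero_iff φ.injective]
    exact hdRne
  have hgdeg : g.natDegree = n - 1 := by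
    rw [hgRc, natDegree_map_eq_of_injective φ.injective, hdRdeg]
  -- per-root divisibility
  have hroot : ∀ θ ∈ g.roots.toFinset,
      (X - C θ) ^ (2 * g.rootMultiplicity θ) ∣ (D.comp R).map φ := by
    intro θ hθ
    rw [Multiset.mem_toFinset, mem_roots hgne] at hθ
    set k : ℕ := g.rootMultiplicity θ with hk
    have hk1 : 1 ≤ k := (rootMultiplicity_pos hgne).mpr hθ
    have hdvdg : (X - C θ) ^ k ∣ g := pow_rootMultiplicity_dvd g θ
    have hkle : k ≤ n + (n - 1) := by
      have h1 : ((X - C θ) ^ k).natDegree ≤ g.natDegree := natDegree_le_of_dvd hdvdg hgne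
      rw [natDegree_pow, natDegree_X_sub_C, mul_one, hgdeg] at h1
      omega
    set c : ℂ := Rc.eval θ with hc
    have hne2 : Rc - C c ≠ 0 := by
      intro hcon
      have : Rc = C c := by rwa [sub_eq_zero] at hcon
      have h2 := hRcdeg
      rw [this, natDegree_C] at h2
      omega
    have hr : (Rc - C c).IsRoot θ := by
      simp [IsRoot, hc]
    have hmult : (Rc - C c).rootMultiplicity θ = k + 1 := by
      have h1 := derivative_rootMultiplicity_of_root hr
      rw [derivative_sub, derivative_C, sub_zero, ← hg] at h1
      have h2 : 1 ≤ (Rc - C c).rootMultiplicity θ := (rootMultiplicity_pos hne2).mpr hr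
      omega
    have hdvdf : (X - C θ) ^ (k + 1) ∣ Rc - C c := by
      rw [← hmult]; exact pow_rootMultiplicity_dvd _ _
    -- kernel argument
    set ψ : ℝ[X] →+* ℂ := (evalRingHom c).comp (mapRingHom φ) with hψ
    have hψC : ψ.comp (C : ℝ →+* ℝ[X]) = φ := by
      ext r
      simp [hψ]
    have hSc : M.map ψ = sylvester n (n - 1) (Rc - C c) g := by
      have h1 : f₀.map ψ = Rc - C c := by
        rw [hf₀, Polynomial.map_sub, Polynomial.map_map, hψC, map_C]
        have h2 : ψ (X : ℝ[X]) = c := by simp [hψ]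
        rw [h2, hRc]
      have hder : derivative f₀ = (derivative R).map (C : ℝ →+* ℝ[X]) := by
        rw [hf₀, derivative_sub, derivative_map, derivative_C, sub_zero]
      have h3 : (derivative f₀).map ψ = g := by
        rw [hder, Polynomial.map_map, hψC, hgRc]
      rw [hM, sylvester_map ψ, h1, h3]
    set Mc : Matrix (Fin (n + (n - 1))) (Fin (n + (n - 1))) ℂ[X] :=
      M.map (mapRingHom φ) with hMc
    have hMceval : Mc.map (evalRingHom c) = sylvester n (n - 1) (Rc - C c) g := by
      rw [← hSc, hMc, Matrix.map_map]
      rfl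
    have hcol : ∀ s : Fin (n + (n - 1)), (s : ℕ) < k → ∀ i,
        ((Mc * (vdmExt (n + (n - 1)) k θ).map (C : ℂ →+* ℂ[X])) i s).eval c = 0 := by
      intro s hs i
      have h1 : ((Mc * (vdmExt (n + (n - 1)) k θ).map (C : ℂ →+* ℂ[X])) i s).eval c
          = ((Mc.map (evalRingHom c)) * vdmExt (n + (n - 1)) k θ) i s := by
        rw [Matrix.mul_apply, Matrix.mul_apply, eval_finset_sum]
        refine Finset.sum_congr rfl fun l _ => ?_
        simp [Matrix.map_apply]
      rw [h1, hMceval]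
      have h2 : ((sylvester n (n - 1) (Rc - C c) g) * vdmExt (n + (n - 1)) k θ) i s
          = (sylvester n (n - 1) (Rc - C c) g).mulVec
              (fun l => vdmExt (n + (n - 1)) k θ l s) i := by
        rw [Matrix.mul_apply, Matrix.mulVec, dotProduct]
      rw [h2]
      have h3 : (fun l : Fin (n + (n - 1)) => vdmExt (n + (n - 1)) k θ l s)
          = fun l : Fin (n + (n - 1)) => (derivative^[(s : ℕ)]
              (X ^ (n + (n - 1) - 1 - (l : ℕ)) : ℂ[X])).eval θ := by
        funext l
        simp only [vdmExt, Matrix.of_apply, if_pos hs]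
      rw [h3]
      have hfdeg : (Rc - C c).natDegree ≤ n := by
        refine le_trans (natDegree_sub_le _ _) ?_
        simp [hRcdeg]
      have hgdeg' : g.natDegree ≤ n - 1 := le_of_eq hgdeg
      have hsf : (X - C θ) ^ ((s : ℕ) + 1) ∣ Rc - C c :=
        dvd_trans (pow_dvd_pow _ (by omega)) hdvdf
      have hsg : (X - C θ) ^ ((s : ℕ) + 1) ∣ g :=
        dvd_trans (pow_dvd_pow _ (by omega)) hdvdg
      have := sylvester_mulVec_eval n (n - 1) (Rc - C c) g hfdeg hgdeg' θ (s : ℕ) hsf hsg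
      exact congrFun this i
    have hdvdMc : (X - C c) ^ k ∣ Mc.det :=
      pow_dvd_det_of_kernel Mc (vdmExt (n + (n - 1)) k θ)
        (vdmExt_det_ne_zero (n + (n - 1)) k hkle θ) c hkle hcol
    have hMcdet : Mc.det = (M.det).map φ := by
      have h := RingHom.map_det (mapRingHom φ) M
      rw [RingHom.mapMatrix_apply] at h
      rw [hMc, ← h]
      rfl
    have hdvdD : (X - C c) ^ k ∣ D.map φ := by
      rw [hDC, Polynomial.map_mul, map_C]
      apply Dvd.dvd.mul_left
      rw [← hMcdet]
      exact hdvdMc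
    obtain ⟨E, hE⟩ := hdvdD
    have hcomp : (D.comp R).map φ = (Rc - C c) ^ k * E.comp Rc := by
      rw [Polynomial.map_comp, ← hRc, hE, mul_comp, pow_comp, sub_comp, X_comp, C_comp]
    rw [hcomp]
    calc (X - C θ) ^ (2 * k) ∣ (X - C θ) ^ ((k + 1) * k) :=
          pow_dvd_pow _ (by nlinarith)
      _ = ((X - C θ) ^ (k + 1)) ^ k := pow_mul _ _ _
      _ ∣ (Rc - C c) ^ k := pow_dvd_pow_of_dvd hdvdf k
      _ ∣ (Rc - C c) ^ k * E.comp Rc := dvd_mul_right _ _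
  -- assemble the product
  have hprod_dvd : (∏ θ ∈ g.roots.toFinset, (X - C θ) ^ (2 * g.rootMultiplicity θ))
      ∣ (D.comp R).map φ := by
    apply Finset.prod_dvd_of_coprime
    · intro a ha b hb hab
      exact (isCoprime_X_sub_C_of_isUnit_sub ((sub_ne_zero.mpr hab).isUnit)).pow
    · exact hroot
  have hcard : g.roots.card = g.natDegree :=
    splits_iff_card_roots.mp (IsAlgClosed.splits g)
  have hsplit : g = C g.leadingCoeff * (g.roots.map fun a => X - C a).prod :=
    (C_leadingCoeff_mul_prod_multiset_X_sub_C hcard).symm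
  have hlcne : g.leadingCoeff ≠ 0 := leadingCoeff_ne_zero.mpr hgne
  have hfact : g ^ 2 = C (g.leadingCoeff ^ 2)
      * ∏ θ ∈ g.roots.toFinset, (X - C θ) ^ (2 * g.rootMultiplicity θ) := by
    conv_lhs => rw [hsplit]
    rw [mul_pow, ← map_pow]
    congr 1
    rw [Finset.prod_multiset_map_count, ← Finset.prod_pow]
    refine Finset.prod_congr rfl fun a _ => ?_
    rw [← pow_mul, count_roots, mul_comm (rootMultiplicity a g) 2]
  have hcc : ∀ (a : ℂ), a ≠ 0 → ∀ (P W : ℂ[X]), (C a * P) * (C a⁻¹ * W) = P * W := by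
    intro a ha P W
    rw [show (C a * P) * (C a⁻¹ * W) = (C a * C a⁻¹) * (P * W) from by ring,
      ← C_mul, mul_inv_cancel₀ ha, C_1, one_mul]
  have hgdvd : g ^ 2 ∣ (D.comp R).map φ := by
    obtain ⟨W, hW⟩ := hprod_dvd
    refine ⟨C ((g.leadingCoeff ^ 2)⁻¹) * W, ?_⟩
    rw [hfact, hcc _ (pow_ne_zero 2 hlcne), hW]
  -- descend to ℝ
  set u : ℝ[X] := C ((n : ℝ)⁻¹) * derivative R with hu
  have hnne : (n : ℝ) ≠ 0 := Nat.cast_ne_zero.mpr (by omega)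
  have humonic : u.Monic := by
    apply monic_of_natDegree_le_of_coeff_eq_one (n - 1)
    · refine le_trans (natDegree_mul_le) ?_
      rw [natDegree_C, zero_add, hdRdeg]
    · rw [hu, coeff_C_mul, hdRcoeff, inv_mul_cancel₀ hnne]
  have humap : (u ^ 2).map φ ∣ (D.comp R).map φ := by
    have h1 : (u ^ 2).map φ = C ((φ ((n : ℝ)⁻¹)) ^ 2) * g ^ 2 := by
      rw [Polynomial.map_pow, hu, Polynomial.map_mul, map_C, ← hgRc, mul_pow, map_pow]
    obtain ⟨W, hW⟩ := hgdvd
    refine ⟨C (((φ ((n : ℝ)⁻¹)) ^ 2)⁻¹) * W, ?_⟩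
    have hz : (φ ((n : ℝ)⁻¹)) ^ 2 ≠ 0 :=
      pow_ne_zero _ ((map_ne_zero φ).mpr (inv_ne_zero hnne))
    rw [h1, hcc _ hz, hW]
  have hudvd : u ^ 2 ∣ D.comp R :=
    (map_dvd_map φ φ.injective (humonic.pow 2)).mp humap
  obtain ⟨U0, hU0⟩ := hudvd
  have hfinal : D.comp R = (derivative R) ^ 2 * (C (((n : ℝ)⁻¹) ^ 2) * U0) := by
    rw [hU0, hu]
    rw [mul_pow, ← map_pow]
    ring
  -- compute degree
  have hcompne : D.comp R ≠ 0 := by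
    intro hcon
    have h1 : (D.comp R).leadingCoeff = 0 := by rw [hcon, leadingCoeff_zero]
    rw [leadingCoeff_comp (by rw [hdeg]; omega)] at h1
    rw [hmonic.leadingCoeff, one_pow, mul_one] at h1
    exact leadingCoeff_ne_zero.mpr hDne h1
  set U : ℝ[X] := C (((n : ℝ)⁻¹) ^ 2) * U0 with hU
  have hUne : U ≠ 0 := by
    intro hcon
    rw [hcon, mul_zero] at hfinal
    exact hcompne hfinal
  have hdR2ne : (derivative R) ^ 2 ≠ 0 := pow_ne_zero _ hdRne
  have hdegU : U.natDegree = (n - 1) * (n - 2) := by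
    have h1 : (D.comp R).natDegree = (n - 1) * n := by
      rw [natDegree_comp, hDdeg, hdeg]
    have h2 : (D.comp R).natDegree = 2 * ((derivative R).natDegree) + U.natDegree := by
      rw [hfinal, natDegree_mul hdR2ne hUne, natDegree_pow]
    rw [hdRdeg] at h2
    have key : (n - 1) * n = 2 * (n - 1) + U.natDegree := by rw [← h1]; exact h2
    obtain ⟨m, rfl⟩ : ∃ m, n = m + 2 := ⟨n - 2, by omega⟩
    have h4 : m + 2 - 1 = m + 1 := rfl
    have h5 : m + 2 - 2 = m := rfl
    rw [h4, h5]
    rw [h4] at key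
    have expand : (m + 1) * (m + 2) = 2 * (m + 1) + (m + 1) * m := by ring
    exact Nat.add_left_cancel (key.symm.trans expand)
  exact ⟨U, hdegU, hfinal⟩
end

section
/- Let x : I → ℝ be a differentiable function on an open interval I containing 0 with x(0) = 0 and such that x(q)^3 + p·x(q) - q = 0 for all q in I, where p ≠ 0. Then for all q in I with 4p^3 + 27q^2 ≠ 0, x satisfies the Riccati equation x'(q) = (6p·x(q)^2 + 9q·x(q) + 4p^2)/(4p^3 + 27q^2). -/
/-- a differentiable root branch of `x³ + px - q = 0` with `x(0) = 0`
satisfies the Riccati ODE `x' = (6px² + 9qx + 4p²)/(4p³ + 27q²)`. -/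
theorem stmt6 (p : ℝ) (hp : p ≠ 0) (a b : ℝ) (ha : a < 0) (hb : 0 < b)
    (x : ℝ → ℝ) (hdiff : ∀ q ∈ Set.Ioo a b, DifferentiableAt ℝ x q)
    (hx0 : x 0 = 0)
    (hroot : ∀ q ∈ Set.Ioo a b, (x q) ^ 3 + p * x q - q = 0) :
    ∀ q ∈ Set.Ioo a b, 4 * p ^ 3 + 27 * q ^ 2 ≠ 0 →
      deriv x q = (6 * p * (x q) ^ 2 + 9 * q * x q + 4 * p ^ 2) / (4 * p ^ 3 + 27 * q ^ 2) := by
  intro q hq hne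
  have hxq : (x q) ^ 3 + p * x q - q = 0 := hroot q hq
  have hqx : q = (x q) ^ 3 + p * x q := by linarith
  -- the function f t = x t ^ 3 + p * x t - t is 0 near q
  set f : ℝ → ℝ := fun t => x t ^ 3 + p * x t - t with hf
  have hev : f =ᶠ[nhds q] (fun _ => 0) := by
    filter_upwards [Ioo_mem_nhds hq.1 hq.2] with t ht
    exact hroot t ht
  have hderiv0 : deriv f q = 0 := by
    rw [Filter.EventuallyEq.deriv_eq hev]
    simp
  have hx := hdiff q hq
  have hD : HasDerivAt f ((3 * (x q) ^ 2) * deriv x q + p * deriv x q - 1) q := by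
    have h1 : HasDerivAt x (deriv x q) q := hx.hasDerivAt
    have h2 : HasDerivAt (fun t => x t ^ 3) (3 * (x q) ^ 2 * deriv x q) q := by
      have := h1.pow 3
      exact (by simpa [mul_assoc] using this : HasDerivAt (x ^ 3) (3 * (x q) ^ 2 * deriv x q) q)
    have h3 : HasDerivAt (fun t => p * x t) (p * deriv x q) q := h1.const_mul p
    have h4 : HasDerivAt (fun t : ℝ => t) 1 q := hasDerivAt_id q
    exact (by simpa using (h2.add h3).sub h4 : HasDerivAt (((fun t => x t ^ 3) + fun t => p * x t) - fun t => t) ((3 * (x q) ^ 2) * deriv x q + p * deriv x q - 1) q)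
  have heq : (3 * (x q) ^ 2) * deriv x q + p * deriv x q - 1 = 0 := by
    rw [← hD.deriv]; exact hderiv0
  -- key factorization
  have hfac : 4 * p ^ 3 + 27 * q ^ 2
      = (3 * (x q) ^ 2 + p) * (9 * (x q) ^ 4 + 15 * p * (x q) ^ 2 + 4 * p ^ 2) := by
    linear_combination (-27*(q + x q ^ 3 + p * x q)) * hxq
  have hnum : 6 * p * (x q) ^ 2 + 9 * q * x q + 4 * p ^ 2
      = 9 * (x q) ^ 4 + 15 * p * (x q) ^ 2 + 4 * p ^ 2 := by
    linear_combination (-9 * x q) * hxq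
  have h3xp : 3 * (x q) ^ 2 + p ≠ 0 := by
    intro h
    apply hne
    rw [hfac, h, zero_mul]
  have hN : 9 * (x q) ^ 4 + 15 * p * (x q) ^ 2 + 4 * p ^ 2 ≠ 0 := by
    intro h
    apply hne
    rw [hfac, h, mul_zero]
  rw [hnum, hfac, eq_div_iff (by rw [← hfac]; exact hne)]
  linear_combination (9 * x q ^ 4 + 15 * p * x q ^ 2 + 4 * p ^ 2) * heq
end

section
/- Let x : I → ℝ be a differentiable function on an open interval I containing 0 with x(0) = 0 and such that x(q)^4 + p·x(q) - q = 0 for all q in I, where p ≠ 0. Then for all q in I with 27p^4 + 256q^3 ≠ 0, x satisfies the Abel equation x'(q) = (36p^2·x(q)^3 + 48pq·x(q)^2 + 64q^2·x(q) + 27p^3)/(27p^4 + 256q^3). -/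
/-- a differentiable root branch of `x⁴ + px - q = 0` with `x(0) = 0`
satisfies the Abel ODE `x' = (36p²x³ + 48pqx² + 64q²x + 27p³)/(27p⁴ + 256q³)`. -/
theorem stmt7 (p : ℝ) (hp : p ≠ 0) (a b : ℝ) (ha : a < 0) (hb : 0 < b)
    (x : ℝ → ℝ) (hdiff : ∀ q ∈ Set.Ioo a b, DifferentiableAt ℝ x q)
    (hx0 : x 0 = 0)
    (hroot : ∀ q ∈ Set.Ioo a b, (x q) ^ 4 + p * x q - q = 0) :
    ∀ q ∈ Set.Ioo a b, 27 * p ^ 4 + 256 * q ^ 3 ≠ 0 →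
      deriv x q = (36 * p ^ 2 * (x q) ^ 3 + 48 * p * q * (x q) ^ 2 + 64 * q ^ 2 * x q
        + 27 * p ^ 3) / (27 * p ^ 4 + 256 * q ^ 3) := by
  intro q hq hD
  set c := x q with hc
  set d := deriv x q with hd
  have hx : HasDerivAt x d q := (hdiff q hq).hasDerivAt
  have hF : HasDerivAt (fun q => (x q) ^ 4 + p * x q - q)
      (4 * c ^ 3 * d + p * d - 1) q := by
    have h1 : HasDerivAt (fun q => (x q) ^ 4) ((4 : ℕ) * c ^ 3 * d) q := by
      simpa using hx.fun_pow 4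
    have h2 : HasDerivAt (fun q => p * x q) (p * d) q := hx.const_mul p
    have h3 : HasDerivAt (fun q : ℝ => q) 1 q := hasDerivAt_id q
    simpa using (h1.fun_add h2).fun_sub h3
  have hF0 : HasDerivAt (fun q => (x q) ^ 4 + p * x q - q) 0 q := by
    have hev : (fun q => (x q) ^ 4 + p * x q - q) =ᶠ[nhds q] fun _ => (0 : ℝ) := by
      filter_upwards [isOpen_Ioo.mem_nhds hq] with r hr using hroot r hr
    exact (hasDerivAt_const q 0).congr_of_eventuallyEq hev
  have heq : 4 * c ^ 3 * d + p * d - 1 = 0 := hF.unique hF0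
  have hd1 : d * (4 * c ^ 3 + p) = 1 := by linarith [heq]; 
  have h2 : c ^ 4 + p * c - q = 0 := hroot q hq
  have key : 27 * p ^ 4 + 256 * q ^ 3 =
      (36 * p ^ 2 * c ^ 3 + 48 * p * q * c ^ 2 + 64 * q ^ 2 * c + 27 * p ^ 3)
        * (4 * c ^ 3 + p) := by
    linear_combination (-(144 * p ^ 2 * c ^ 2) - 192 * p * q * c - 256 * q ^ 2) * h2
  rw [eq_div_iff hD, key]
  linear_combination (36 * p ^ 2 * c ^ 3 + 48 * p * q * c ^ 2 + 64 * q ^ 2 * c + 27 * p ^ 3) * hd1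
end

section
/- Let x : I → ℝ be a twice-differentiable function on an open interval I containing 0 satisfying x(q)^3 + p·x(q) - q = 0 for all q in I, with x(0) = 0 and p ≠ 0. Then x satisfies the second-order linear ODE (4p^3 + 27q^2)·x''(q) + 27q·x'(q) - 3·x(q) = 0 on I. -/
/-- a twice-differentiable root branch of `x³ + px - q = 0` with `x(0) = 0`
satisfies `(4p³ + 27q²)·x'' + 27q·x' - 3x = 0`. -/
theorem stmt10 (p : ℝ) (hp : p ≠ 0) (a b : ℝ) (ha : a < 0) (hb : 0 < b)
    (hdisc : ∀ q ∈ Set.Ioo a b, 4 * p ^ 3 + 27 * q ^ 2 ≠ 0)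
    (x : ℝ → ℝ)
    (hdiff : ∀ q ∈ Set.Ioo a b, DifferentiableAt ℝ x q)
    (hdiff2 : ∀ q ∈ Set.Ioo a b, DifferentiableAt ℝ (deriv x) q)
    (hx0 : x 0 = 0)
    (hroot : ∀ q ∈ Set.Ioo a b, (x q) ^ 3 + p * x q - q = 0) :
    ∀ q ∈ Set.Ioo a b,
      (4 * p ^ 3 + 27 * q ^ 2) * deriv (deriv x) q + 27 * q * deriv x q - 3 * x q = 0 := by
  -- First derivative identity: (3 x² + p) x' - 1 = 0 onative interval
  have hE1 : ∀ q ∈ Set.Ioo a b, (3 * (x q) ^ 2 + p) * deriv x q - 1 = 0 := by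
    intro q hq
    have hmem : Set.Ioo a b ∈ nhds q := isOpen_Ioo.mem_nhds hq
    have hx : HasDerivAt x (deriv x q) q := (hdiff q hq).hasDerivAt
    have hF : HasDerivAt (fun t => x t ^ 3 + p * x t - t)
        ((3 * (x q) ^ 2 + p) * deriv x q - 1) q := by
      have h1 : HasDerivAt (fun t => x t ^ 3 + p * x t - t) _ q := ((hx.pow 3).add ((hasDerivAt_const q p).mul hx)).sub (hasDerivAt_id q)
      convert h1 using 1
      ring
    have heq : (fun t => x t ^ 3 + p * x t - t) =ᶠ[nhds q] fun _ => (0 : ℝ) :=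
      Filter.eventuallyEq_of_mem hmem fun t ht => hroot t ht
    have hd0 : deriv (fun t => x t ^ 3 + p * x t - t) q = 0 := by
      rw [heq.deriv_eq]
      simp
    rw [hF.deriv] at hd0
    exact hd0
  intro q hq
  have hmem : Set.Ioo a b ∈ nhds q := isOpen_Ioo.mem_nhds hq
  have hx : HasDerivAt x (deriv x q) q := (hdiff q hq).hasDerivAt
  have hx2 : HasDerivAt (deriv x) (deriv (deriv x) q) q := (hdiff2 q hq).hasDerivAt
  -- Second derivative identity: 6 x x'² + (3 x² + p) x'' = 0
  have hG : HasDerivAt (fun t => (3 * (x t) ^ 2 + p) * deriv x t - 1)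
      (6 * x q * deriv x q * deriv x q + (3 * (x q) ^ 2 + p) * deriv (deriv x) q) q := by
    have hA : HasDerivAt (fun t => 3 * (x t) ^ 2 + p) (6 * x q * deriv x q) q := by
      have : HasDerivAt (fun t => 3 * (x t) ^ 2 + p) _ q := ((hx.pow 2).const_mul 3).add_const p
      convert this using 1
      ring
    exact (hA.mul hx2).sub_const 1
  have heq2 : (fun t => (3 * (x t) ^ 2 + p) * deriv x t - 1) =ᶠ[nhds q] fun _ => (0 : ℝ) :=
    Filter.eventuallyEq_of_mem hmem fun t ht => hE1 t ht
  have hE2 : 6 * x q * deriv x q * deriv x q + (3 * (x q) ^ 2 + p) * deriv (deriv x) q = 0 := by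
    have hd0 : deriv (fun t => (3 * (x t) ^ 2 + p) * deriv x t - 1) q = 0 := by
      rw [heq2.deriv_eq]
      simp
    rw [hG.deriv] at hd0
    exact hd0
  -- abbreviations
  set u := x q with hu
  set v := deriv x q with hv
  set w := deriv (deriv x) q with hw
  have e1 : (3 * u ^ 2 + p) * v - 1 = 0 := hE1 q hq
  have e3 : u ^ 3 + p * u - q = 0 := hroot q hq
  have hA : 3 * u ^ 2 + p ≠ 0 := by
    intro h
    rw [h] at e1
    norm_num at e1
  have key : (3 * u ^ 2 + p) * ((4 * p ^ 3 + 27 * q ^ 2) * w + 27 * q * v - 3 * u) = 0 := by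
    linear_combination
      (-6 * u * (3 * u ^ 2 + 4 * p) * (2 + ((3 * u ^ 2 + p) * v - 1)) + 27 * (u ^ 3 + p * u)) * e1
      + (3 * u ^ 2 + p) ^ 2 * (3 * u ^ 2 + 4 * p) * hE2
      + (-27 * (3 * u ^ 2 + p) * (w * (u ^ 3 + p * u + q) + v)) * e3
  rcases mul_eq_zero.mp key with h | h
  · exact absurd h hA
  · exact h
end

section
/- Let x : I → ℝ be a three-times differentiable function on an open interval I containing 0 satisfying x(q)^4 + p·x(q) - q = 0 for all q in I, with x(0) = 0 and p ≠ 0. Then x satisfies the third-order linear ODE (27p^4 + 256q^3)·x'''(q) + 1152q^2·x''(q) + 688q·x'(q) - 40·x(q) = 0 on I. -/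
/-- a three-times differentiable root branch of `x⁴ + px - q = 0` with
`x(0) = 0` satisfies `(27p⁴ + 256q³)·x''' + 1152q²·x'' + 688q·x' - 40x = 0`. -/
theorem stmt11 (p : ℝ) (hp : p ≠ 0) (a b : ℝ) (ha : a < 0) (hb : 0 < b)
    (hdisc : ∀ q ∈ Set.Ioo a b, 27 * p ^ 4 + 256 * q ^ 3 ≠ 0)
    (x : ℝ → ℝ)
    (hdiff : ∀ q ∈ Set.Ioo a b, DifferentiableAt ℝ x q)
    (hdiff2 : ∀ q ∈ Set.Ioo a b, DifferentiableAt ℝ (deriv x) q)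
    (hdiff3 : ∀ q ∈ Set.Ioo a b, DifferentiableAt ℝ (deriv (deriv x)) q)
    (hx0 : x 0 = 0)
    (hroot : ∀ q ∈ Set.Ioo a b, (x q) ^ 4 + p * x q - q = 0) :
    ∀ q ∈ Set.Ioo a b,
      (27 * p ^ 4 + 256 * q ^ 3) * deriv (deriv (deriv x)) q
        + 1152 * q ^ 2 * deriv (deriv x) q + 688 * q * deriv x q - 40 * x q = 0 := by
  have hopen : IsOpen (Set.Ioo a b) := isOpen_Ioo
  -- first derivative relation on the whole interval
  have e1all : ∀ q ∈ Set.Ioo a b, (4 * (x q) ^ 3 + p) * deriv x q = 1 := by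
    intro q hq
    have hx : HasDerivAt x (deriv x q) q := (hdiff q hq).hasDerivAt
    have hF : HasDerivAt (fun t => x t ^ 4 + p * x t)
        (4 * x q ^ 3 * deriv x q + p * deriv x q) q := by
      have h1 : HasDerivAt (fun t => x t ^ 4) ((4 : ℕ) * x q ^ 3 * deriv x q) q := by
        simpa using hx.fun_pow 4
      have h2 : HasDerivAt (fun t => p * x t) (p * deriv x q) q := hx.const_mul p
      simpa using h1.fun_add h2
    have hFid : HasDerivAt (fun t => x t ^ 4 + p * x t) 1 q := by
      have heq : (fun t : ℝ => x t ^ 4 + p * x t) =ᶠ[nhds q] fun t => t := by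
        filter_upwards [hopen.mem_nhds hq] with t ht
        have := hroot t ht; linarith
      exact (hasDerivAt_id q).congr_of_eventuallyEq heq
    have := hF.unique hFid
    linarith [this]
  -- second derivative relation on the whole interval
  have e2all : ∀ q ∈ Set.Ioo a b,
      12 * (x q) ^ 2 * (deriv x q) ^ 2 + (4 * (x q) ^ 3 + p) * deriv (deriv x) q = 0 := by
    intro q hq
    have hx : HasDerivAt x (deriv x q) q := (hdiff q hq).hasDerivAt
    have hx2 : HasDerivAt (deriv x) (deriv (deriv x) q) q := (hdiff2 q hq).hasDerivAt
    have hc : HasDerivAt (fun t => 4 * x t ^ 3 + p)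
        (4 * ((3 : ℕ) * x q ^ 2 * deriv x q)) q := by
      simpa using (((hx.pow 3).const_mul 4).add_const p)
    have hG : HasDerivAt (fun t => (4 * x t ^ 3 + p) * deriv x t)
        (4 * ((3 : ℕ) * x q ^ 2 * deriv x q) * deriv x q
          + (4 * x q ^ 3 + p) * deriv (deriv x) q) q := hc.mul hx2
    have hG1 : HasDerivAt (fun t => (4 * x t ^ 3 + p) * deriv x t) 0 q := by
      have heq : (fun t : ℝ => (4 * x t ^ 3 + p) * deriv x t) =ᶠ[nhds q]
          fun _ => (1 : ℝ) := by
        filter_upwards [hopen.mem_nhds hq] with t ht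
        exact e1all t ht
      exact (hasDerivAt_const q (1 : ℝ)).congr_of_eventuallyEq heq
    have := hG.unique hG1
    push_cast at this
    nlinarith [this]
  -- now at a fixed point
  intro q hq
  have hx : HasDerivAt x (deriv x q) q := (hdiff q hq).hasDerivAt
  have hx2 : HasDerivAt (deriv x) (deriv (deriv x) q) q := (hdiff2 q hq).hasDerivAt
  have hx3 : HasDerivAt (deriv (deriv x)) (deriv (deriv (deriv x)) q) q :=
    (hdiff3 q hq).hasDerivAt
  set u := x q with hu
  set u1 := deriv x q with hu1
  set u2 := deriv (deriv x) q with hu2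
  set u3 := deriv (deriv (deriv x)) q with hu3
  -- third derivative relation at q
  have e3 : 24 * u * u1 ^ 3 + 36 * u ^ 2 * u1 * u2 + (4 * u ^ 3 + p) * u3 = 0 := by
    have hA : HasDerivAt (fun t => 12 * x t ^ 2 * (deriv x t) ^ 2)
        (12 * ((2 : ℕ) * x q ^ 1 * deriv x q) * (deriv x q) ^ 2
          + 12 * x q ^ 2 * ((2 : ℕ) * deriv x q ^ 1 * deriv (deriv x) q)) q := by
      simpa using ((hx.fun_pow 2).const_mul 12).fun_mul (hx2.fun_pow 2)
    have hc : HasDerivAt (fun t => 4 * x t ^ 3 + p)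
        (4 * ((3 : ℕ) * x q ^ 2 * deriv x q)) q := by
      simpa using (((hx.pow 3).const_mul 4).add_const p)
    have hB : HasDerivAt (fun t => (4 * x t ^ 3 + p) * deriv (deriv x) t)
        (4 * ((3 : ℕ) * x q ^ 2 * deriv x q) * deriv (deriv x) q
          + (4 * x q ^ 3 + p) * deriv (deriv (deriv x)) q) q := hc.mul hx3
    have hH := hA.add hB
    have hH0 : HasDerivAt (fun t =>
        12 * x t ^ 2 * (deriv x t) ^ 2 + (4 * x t ^ 3 + p) * deriv (deriv x) t) 0 q := by
      have heq : (fun t : ℝ =>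
          12 * x t ^ 2 * (deriv x t) ^ 2 + (4 * x t ^ 3 + p) * deriv (deriv x) t)
          =ᶠ[nhds q] fun _ => (0 : ℝ) := by
        filter_upwards [hopen.mem_nhds hq] with t ht
        exact e2all t ht
      exact (hasDerivAt_const q (0 : ℝ)).congr_of_eventuallyEq heq
    have := hH.unique hH0
    push_cast at this
    rw [← hu, ← hu1, ← hu2, ← hu3] at this
    nlinarith [this]
  have e1 : (4 * u ^ 3 + p) * u1 = 1 := e1all q hq
  have e2 : 12 * u ^ 2 * u1 ^ 2 + (4 * u ^ 3 + p) * u2 = 0 := e2all q hq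
  have hqeq : q = u ^ 4 + p * u := by have := hroot q hq; linarith
  set D := 4 * u ^ 3 + p with hD
  have hDne : D ≠ 0 := by
    intro h; rw [h] at e1; simp at e1
  have f1 : u1 = 1 / D := by field_simp; linarith [e1]
  have f2 : u2 = -12 * u ^ 2 / D ^ 3 := by
    rw [eq_div_iff (pow_ne_zero 3 hDne)]
    linear_combination D ^ 2 * e2 - 12 * u ^ 2 * (D * u1 + 1) * e1
  have f3 : u3 = (432 * u ^ 4 - 24 * u * D) / D ^ 5 := by
    rw [eq_div_iff (pow_ne_zero 5 hDne)]
    linear_combination D ^ 4 * e3 - 36 * u ^ 2 * u1 * D ^ 3 * e2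
      + (432 * u ^ 4 - 24 * u * D) * (D ^ 2 * u1 ^ 2 + D * u1 + 1) * e1
  rw [hqeq, f1, f2, f3]
  field_simp
  rw [hD]
  ring
end

section
/- Let x : I → ℝ be a twice-differentiable function satisfying x(q)^3 + s·x(q)^2 + p·x(q) - q = 0 on an open interval I. Then on I it satisfies the non-homogeneous linear ODE (4p^3 + 27q^2 + 18pqs - p^2s^2 - 4qs^3)·x''(q) + (27q + 9ps - 2s^3)·x'(q) - 3·x(q) - s = 0, provided 4p^3 + 27q^2 + 18pqs - p^2s^2 - 4qs^3 ≠ 0 on I. -/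
/-- a twice-differentiable root branch of `x³ + sx² + px - q = 0` satisfies
the non-homogeneous linear ODE
`(4p³+27q²+18pqs-p²s²-4qs³)·x'' + (27q+9ps-2s³)·x' - 3x - s = 0`. -/
theorem stmt12 (p s : ℝ) (a b : ℝ) (hab : a < b)
    (hdisc : ∀ q ∈ Set.Ioo a b,
      4 * p ^ 3 + 27 * q ^ 2 + 18 * p * q * s - p ^ 2 * s ^ 2 - 4 * q * s ^ 3 ≠ 0)
    (x : ℝ → ℝ)
    (hdiff : ∀ q ∈ Set.Ioo a b, DifferentiableAt ℝ x q)
    (hdiff2 : ∀ q ∈ Set.Ioo a b, DifferentiableAt ℝ (deriv x) q)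
    (hroot : ∀ q ∈ Set.Ioo a b, (x q) ^ 3 + s * (x q) ^ 2 + p * x q - q = 0) :
    ∀ q ∈ Set.Ioo a b,
      (4 * p ^ 3 + 27 * q ^ 2 + 18 * p * q * s - p ^ 2 * s ^ 2 - 4 * q * s ^ 3)
          * deriv (deriv x) q
        + (27 * q + 9 * p * s - 2 * s ^ 3) * deriv x q - 3 * x q - s = 0 := by
  -- Step 1: first implicit differentiation, valid at every point of the interval.
  have hE1 : ∀ q ∈ Set.Ioo a b,
      (3 * (x q) ^ 2 + 2 * s * x q + p) * deriv x q - 1 = 0 := by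
    intro q hq
    have hx : HasDerivAt x (deriv x q) q := (hdiff q hq).hasDerivAt
    have hF : HasDerivAt (fun t => (x t) ^ 3 + s * (x t) ^ 2 + p * x t - t)
        ((3 * (x q) ^ 2 + 2 * s * x q + p) * deriv x q - 1) q := by
      have h1 := hx.fun_pow 3
      have h2 := (hx.fun_pow 2).const_mul s
      have h3 := hx.const_mul p
      have h4 := ((h1.fun_add h2).fun_add h3).fun_sub (hasDerivAt_id' q)
      refine h4.congr_deriv ?_
      push_cast
      ring
    have heq : (fun t => (x t) ^ 3 + s * (x t) ^ 2 + p * x t - t) =ᶠ[nhds q]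
        (fun _ => (0 : ℝ)) :=
      Filter.eventuallyEq_of_mem (isOpen_Ioo.mem_nhds hq) hroot
    have : deriv (fun t => (x t) ^ 3 + s * (x t) ^ 2 + p * x t - t) q = 0 := by
      rw [heq.deriv_eq]; simp
    rw [hF.deriv] at this
    exact this
  intro q hq
  set y := x q with hy
  set u := deriv x q with hu
  set v := deriv (deriv x) q with hv
  have hf := hroot q hq
  have h1 := hE1 q hq
  -- Step 2: second implicit differentiation at q.
  have hE2 : (6 * y + 2 * s) * u ^ 2 + (3 * y ^ 2 + 2 * s * y + p) * v = 0 := by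
    have hx : HasDerivAt x u q := (hdiff q hq).hasDerivAt
    have hx2 : HasDerivAt (deriv x) v q := (hdiff2 q hq).hasDerivAt
    have hG : HasDerivAt (fun t => (3 * (x t) ^ 2 + 2 * s * x t + p) * deriv x t - 1)
        ((6 * y + 2 * s) * u ^ 2 + (3 * y ^ 2 + 2 * s * y + p) * v) q := by
      have ha : HasDerivAt (fun t => 3 * (x t) ^ 2 + 2 * s * x t + p)
          (6 * y * u + 2 * s * u) q := by
        have h1 := (hx.fun_pow 2).const_mul 3
        have h2 := hx.const_mul (2 * s)
        have h3 := (h1.fun_add h2).add_const p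
        refine h3.congr_deriv ?_
        push_cast
        ring
      have h4 := (ha.fun_mul hx2).sub_const 1
      refine h4.congr_deriv ?_
      ring
    have heq : (fun t => (3 * (x t) ^ 2 + 2 * s * x t + p) * deriv x t - 1) =ᶠ[nhds q]
        (fun _ => (0 : ℝ)) :=
      Filter.eventuallyEq_of_mem (isOpen_Ioo.mem_nhds hq) hE1
    have hz : deriv (fun t => (3 * (x t) ^ 2 + 2 * s * x t + p) * deriv x t - 1) q = 0 := by
      rw [heq.deriv_eq]; simp
    rw [hG.deriv] at hz
    exact hz
  -- g ≠ 0 from the nonvanishing discriminant.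
  have hg : (3 * y ^ 2 + 2 * s * y + p) ≠ 0 := by
    intro h0
    apply hdisc q hq
    linear_combination
      (-(27 * (q + (y ^ 3 + s * y ^ 2 + p * y)) + 18 * p * s - 4 * s ^ 3)) * hf
      + ((3 * y ^ 2 + 2 * s * y + p) * (3 * y ^ 2 + 2 * s * y - s ^ 2 + 4 * p)) * h0
  -- Key algebraic identity.
  have key : (3 * y ^ 2 + 2 * s * y + p) ^ 3 *
      ((4 * p ^ 3 + 27 * q ^ 2 + 18 * p * q * s - p ^ 2 * s ^ 2 - 4 * q * s ^ 3) * v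
        + (27 * q + 9 * p * s - 2 * s ^ 3) * u - 3 * y - s) = 0 := by
    linear_combination
      ((27 * q + 9 * p * s - 2 * s ^ 3) * (3 * y ^ 2 + 2 * s * y + p) ^ 2
        - (4 * p ^ 3 + 27 * q ^ 2 + 18 * p * q * s - p ^ 2 * s ^ 2 - 4 * q * s ^ 3)
          * (6 * y + 2 * s) * ((3 * y ^ 2 + 2 * s * y + p) * u + 1)) * h1
      + ((4 * p ^ 3 + 27 * q ^ 2 + 18 * p * q * s - p ^ 2 * s ^ 2 - 4 * q * s ^ 3)
          * (3 * y ^ 2 + 2 * s * y + p) ^ 2) * hE2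
      + (27 * (6 * y + 2 * s) * (q + (y ^ 3 + s * y ^ 2 + p * y))
          - 27 * (3 * y ^ 2 + 2 * s * y + p) ^ 2
          + (6 * y + 2 * s) * (18 * p * s - 4 * s ^ 3)) * hf
  rcases mul_eq_zero.mp key with h | h
  · exact absurd h (pow_ne_zero 3 hg)
  · exact h
end

section
/- For p < 0 and |q| < √(-4p^3/27), the real number x = (2√(-p)/√3)·sin((1/3)·arcsin((3√3 q)/(2p√(-p)))) satisfies x^3 + p·x - q = 0. -/
/-- for `p < 0` and `|q| < √(-4p³/27)`,
`x = (2√(-p)/√3)·sin((1/3)·arcsin(3√3 q/(2p√(-p))))` solves `x³ + px - q = 0`. -/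
theorem stmt14 (p q : ℝ) (hp : p < 0) (hq : |q| < Real.sqrt (-4 * p ^ 3 / 27))
    (x : ℝ)
    (hx : x = (2 * Real.sqrt (-p) / Real.sqrt 3) *
      Real.sin ((1 / 3) * Real.arcsin (3 * Real.sqrt 3 * q / (2 * p * Real.sqrt (-p))))) :
    x ^ 3 + p * x - q = 0 := by
  set r := Real.sqrt (-p) with hr_def
  set s3 := Real.sqrt 3 with hs3_def
  have hr2 : r ^ 2 = -p := Real.sq_sqrt (by linarith)
  have hrpos : 0 < r := Real.sqrt_pos.mpr (by linarith)
  have hs32 : s3 ^ 2 = 3 := Real.sq_sqrt (by norm_num)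
  have hs3pos : 0 < s3 := Real.sqrt_pos.mpr (by norm_num)
  have h6 : r ^ 6 = (-p) ^ 3 := by rw [← hr2]; ring
  have hkey : Real.sqrt (-4 * p ^ 3 / 27) = 2 * r ^ 3 / (3 * s3) := by
    rw [show -4 * p ^ 3 / 27 = (2 * r ^ 3 / (3 * s3)) ^ 2 by
      field_simp
      linear_combination (-36 * p ^ 3) * hs32 - 108 * h6]
    exact Real.sqrt_sq (by positivity)
  rw [hkey] at hq
  set t := 3 * s3 * q / (2 * p * r) with ht_def
  have hqa : 3 * s3 * |q| ≤ 2 * r ^ 3 := by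
    have h := (lt_div_iff₀ (by positivity : (0:ℝ) < 3 * s3)).mp hq
    nlinarith [h]
  have habs : |t| ≤ 1 := by
    have h1 : |3 * s3 * q| = 3 * s3 * |q| := by
      rw [abs_mul, abs_of_pos (by positivity : (0:ℝ) < 3 * s3)]
    have h2 : |2 * p * r| = 2 * (-p) * r := by
      rw [abs_mul, abs_of_pos hrpos, abs_of_neg (by nlinarith : 2 * p < 0)]
      ring
    rw [ht_def, abs_div, h1, h2,
      div_le_one (by nlinarith [mul_pos (by linarith : (0:ℝ) < -p) hrpos] : (0:ℝ) < 2 * (-p) * r)]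
    nlinarith [hqa, hr2, hrpos]
  have hsin : Real.sin (Real.arcsin t) = t :=
    Real.sin_arcsin (by linarith [(abs_le.mp habs).1]) (by linarith [(abs_le.mp habs).2])
  set s := Real.sin ((1 / 3) * Real.arcsin t) with hs_def
  have htriple : Real.sin (3 * ((1 / 3) * Real.arcsin t)) =
      3 * s - 4 * s ^ 3 := Real.sin_three_mul _
  rw [show 3 * ((1 / 3) * Real.arcsin t) = Real.arcsin t by ring, hsin] at htriple
  have hne : 2 * p * r ≠ 0 := by
    intro h
    nlinarith [mul_pos (by linarith : (0:ℝ) < -p) hrpos]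
  have hq_eq : 3 * s3 * q = (3 * s - 4 * s ^ 3) * (2 * p * r) := by
    rw [← htriple, ht_def, div_mul_cancel₀ _ hne]
  have hp' : p = -(r ^ 2) := by linarith [hr2]
  rw [hx]
  field_simp
  linear_combination (-1) * hq_eq + (2 * r * s * p - q * s3) * hs32 +
    (8 * r * s ^ 3) * hr2
end

section
/- Let p, q, x, w be real numbers with p ≠ 0. If (2xw + 1)^2 + 1 - 2p·w^3 = 0 and -p^2·w^6 + 4q·w^4 + 1 = 0, then x^4 + p·x - q = 0. -/
/-- if `(2xw+1)² + 1 - 2pw³ = 0` and `-p²w⁶ + 4qw⁴ + 1 = 0` with `p ≠ 0`,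
then `x⁴ + px - q = 0`. -/
theorem stmt17 (p q x w : ℝ) (hp : p ≠ 0)
    (h1 : (2 * x * w + 1) ^ 2 + 1 - 2 * p * w ^ 3 = 0)
    (h2 : -p ^ 2 * w ^ 6 + 4 * q * w ^ 4 + 1 = 0) :
    x ^ 4 + p * x - q = 0 := by
  have hw : w ≠ 0 := by
    rintro rfl
    simp at h2
  have key : (x ^ 4 + p * x - q) * (16 * w ^ 4) = 0 := by
    linear_combination (-8*x*w + ((2*x*w+1)^2+1) - 2*p*w^3 + 4*p*w^3) * h1 + (-4) * h2
  have h16 : (16 : ℝ) * w ^ 4 ≠ 0 := by positivity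
  exact (mul_eq_zero.mp key).resolve_right h16
end
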